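/- Let $R$ be a local Artin ring, $H' \xrightarrow{d_1} H \xrightarrow{d_2} H''$ a complex of finitely generated free $R$-modules (i.e. $d_2 \circ d_1 = 0$) such that both $\operatorname{im} d_1$ and $\ker d_2$ are free $R$-modules. Then the cohomology module $\ker d_2 / \operatorname{im} d_1$ is a free $R$-module. -/

import Mathlib

open IsLocalRing

/-- A nontrivial Artinian local ring has a nonzero "socle" element killing the
maximal ideal. -/
lemma exists_socle_elt_aux (R : Type*) [CommRing R] [IsLocalRing R] [IsArtinianRing R]
    [Nontrivial R] : ∃ s : R, s ≠ 0 ∧ ∀ a ∈ maximalIdeal R, s * a = 0 := by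
  classical
  have hnil : IsNilpotent (maximalIdeal R) := by
    have h := IsArtinianRing.isNilpotent_jacobson_bot (R := R)
    rwa [IsLocalRing.jacobson_eq_maximalIdeal ⊥ bot_ne_top] at h
  obtain ⟨n, hn⟩ := hnil
  have hex : ∃ n, (maximalIdeal R) ^ n = 0 := ⟨n, hn⟩
  have h0 : (maximalIdeal R) ^ (Nat.find hex) = 0 := Nat.find_spec hex
  have hpos : Nat.find hex ≠ 0 := by
    intro h
    rw [h, pow_zero, Ideal.one_eq_top] at h0
    have h1 : (1 : R) ∈ (0 : Ideal R) := h0 ▸ Submodule.mem_top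
    rw [Ideal.zero_eq_bot, Ideal.mem_bot] at h1
    exact one_ne_zero h1
  have hlt : (maximalIdeal R) ^ (Nat.find hex - 1) ≠ 0 := Nat.find_min hex (by omega)
  obtain ⟨s, hs, hs0⟩ := Submodule.exists_mem_ne_zero_of_ne_bot
    (p := (maximalIdeal R) ^ (Nat.find hex - 1)) (by simpa using hlt)
  refine ⟨s, hs0, fun a ha => ?_⟩
  have hmem : s * a ∈ (maximalIdeal R) ^ (Nat.find hex) := by
    have h' := Ideal.mul_mem_mul hs ha
    rwa [← pow_succ, Nat.sub_add_cancel (Nat.one_le_iff_ne_zero.mpr hpos)] at h'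
  rw [h0] at hmem
  simpa using hmem

/-- Over an Artinian local ring, an injective map from a free module detects the
maximal-ideal filtration. -/
lemma mem_smul_top_of_inj_aux {R : Type*} [CommRing R] [IsLocalRing R] [IsArtinianRing R]
    {M F : Type*} [AddCommGroup M] [Module R M] [Module.Free R M]
    [AddCommGroup F] [Module R F]
    (f : M →ₗ[R] F) (hf : Function.Injective f) (x : M)
    (hx : f x ∈ (maximalIdeal R) • (⊤ : Submodule R F)) :
    x ∈ (maximalIdeal R) • (⊤ : Submodule R M) := by
  rcases subsingleton_or_nontrivial R with hR | hR
  · haveI := Module.subsingleton R M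
    rw [Subsingleton.elim x 0]; exact Submodule.zero_mem _
  by_contra hxm
  classical
  let b := Module.Free.chooseBasis R M
  have hcoord : ∃ j, b.repr x j ∉ maximalIdeal R := by
    by_contra hall
    push_neg at hall
    apply hxm
    have hx' := (b.linearCombination_repr x).symm
    rw [Finsupp.linearCombination_apply] at hx'
    rw [hx']
    apply Submodule.sum_mem
    intro c hc
    exact Submodule.smul_mem_smul (hall c) Submodule.mem_top
  obtain ⟨j, hj⟩ := hcoord
  have hu : IsUnit (b.repr x j) := by
    by_contra h
    exact hj ((IsLocalRing.mem_maximalIdeal _).mpr h)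
  obtain ⟨s, hs0, hsm⟩ := exists_socle_elt_aux R
  have h1 : s • f x = 0 := by
    refine Submodule.smul_induction_on hx (fun r hr y _ => ?_) (fun y z hy hz => ?_)
    · rw [smul_smul, hsm r hr, zero_smul]
    · rw [smul_add, hy, hz, add_zero]
  have h2 : s • x = 0 := hf (by rw [map_smul, h1, map_zero])
  have h3 : s * b.repr x j = 0 := by
    have h4 := congrArg (fun y => b.repr y j) h2
    simpa using h4
  apply hs0
  refine hu.mul_left_cancel ?_
  rw [mul_zero, mul_comm]
  exact h3

/-- **Lemma.** Let `R` be a local Artin ring and `H' → H → H''` a complex of finitely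
generated free `R`-modules (`d₂ ∘ d₁ = 0`) such that `im d₁` and `ker d₂` are free.
Then the cohomology `ker d₂ / im d₁` is a free `R`-module. -/
theorem cohomology_free_of_free_image_kernel
    (R : Type*) [CommRing R] [IsLocalRing R] [IsArtinianRing R]
    (H' H H'' : Type*)
    [AddCommGroup H'] [Module R H'] [Module.Finite R H'] [Module.Free R H']
    [AddCommGroup H] [Module R H] [Module.Finite R H] [Module.Free R H]
    [AddCommGroup H''] [Module R H''] [Module.Finite R H''] [Module.Free R H'']
    (d₁ : H' →ₗ[R] H) (d₂ : H →ₗ[R] H'')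
    (hcomplex : d₂ ∘ₗ d₁ = 0)
    (him : Module.Free R (LinearMap.range d₁))
    (hker : Module.Free R (LinearMap.ker d₂)) :
    Module.Free R
      ((LinearMap.ker d₂) ⧸ (LinearMap.range d₁).comap (LinearMap.ker d₂).subtype) := by
  classical
  have hle : LinearMap.range d₁ ≤ LinearMap.ker d₂ :=
    LinearMap.range_le_ker_iff.mpr hcomplex
  set K := LinearMap.ker d₂ with hK
  set N := LinearMap.range d₁ with hN
  let f : N →ₗ[R] K := Submodule.inclusion hle
  have hfinj : Function.Injective f := Submodule.inclusion_injective hle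
  haveI : Module.Free R N := him
  haveI : Module.Free R K := hker
  -- finiteness of K
  haveI : Module.Finite R K := by
    rcases subsingleton_or_nontrivial R with hR | hR
    · haveI := Module.subsingleton R K
      infer_instance
    · let bK := Module.Free.chooseBasis R K
      haveI : Finite (Module.Free.ChooseBasisIndex R K) := by
        refine WellFoundedLT.finite_of_iSupIndep
          bK.linearIndependent.iSupIndep_span_singleton fun i contra => ?_
        apply bK.linearIndependent.ne_zero i
        have hmem : bK i ∈ R ∙ bK i := Submodule.mem_span_singleton_self _
        rwa [contra, Submodule.mem_bot] at hmem
      exact Module.Finite.of_basis bK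
  have hexact : Function.Exact f (Submodule.mkQ (N.comap K.subtype)) := by
    rw [LinearMap.exact_iff, Submodule.ker_mkQ, Submodule.range_inclusion]
  have hinj : Function.Injective (f.lTensor (IsLocalRing.ResidueField R)) := by
    rw [injective_iff_map_eq_zero]
    intro z hz
    let eM := TensorProduct.quotTensorEquivQuotSMul N (maximalIdeal R)
    let eK := TensorProduct.quotTensorEquivQuotSMul K (maximalIdeal R)
    obtain ⟨x, hxz⟩ := Submodule.Quotient.mk_surjective _ (eM z)
    have hone : (1 : R ⧸ maximalIdeal R) = Ideal.Quotient.mk _ 1 := (map_one _).symm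
    have heqM : eM ((1 : R ⧸ maximalIdeal R) ⊗ₜ[R] x) = Submodule.Quotient.mk x := by
      simp only [eM]
      rw [hone, TensorProduct.quotTensorEquivQuotSMul_mk_tmul, one_smul]
    have hz' : z = (1 : R ⧸ maximalIdeal R) ⊗ₜ[R] x := by
      apply eM.injective
      rw [← hxz, heqM]
    have hfx : ((1 : R ⧸ maximalIdeal R) ⊗ₜ[R] (f x) :
        TensorProduct R (R ⧸ maximalIdeal R) K) = 0 := by
      rw [hz'] at hz
      exact hz
    have hfx' : f x ∈ (maximalIdeal R) • (⊤ : Submodule R K) := by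
      have heqK : eK ((1 : R ⧸ maximalIdeal R) ⊗ₜ[R] (f x)) =
          Submodule.Quotient.mk (f x) := by
        simp only [eK]
        rw [hone, TensorProduct.quotTensorEquivQuotSMul_mk_tmul, one_smul]
      have h5 : eK ((1 : R ⧸ maximalIdeal R) ⊗ₜ[R] (f x)) = 0 :=
        eK.map_eq_zero_iff.mpr hfx
      rw [heqK] at h5
      exact (Submodule.Quotient.mk_eq_zero _).mp h5
    have hxm : x ∈ (maximalIdeal R) • (⊤ : Submodule R N) :=
      mem_smul_top_of_inj_aux f hfinj x hfx'
    rw [hz']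
    refine eM.map_eq_zero_iff.mp ?_
    rw [heqM]
    exact (Submodule.Quotient.mk_eq_zero _).mpr hxm
  exact Module.free_of_lTensor_residueField_injective f _
    (Submodule.mkQ_surjective _) hexact hinj
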